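/- arXiv:2509.05545 — 3 statements merged into one kernel-verified Lean document; each statement's English description precedes it below -/
import Mathlib

section
/- Let S be a type, d : S → S → ℝ a function satisfying the triangle inequality d(x,z) ≤ d(x,y) + d(y,z), and set V*(x,y) = -d(x,y). Fix states s_i, s_j, ŝ in S and margins c_prog > 0 and c_nontrivial > 0. If the three loss terms vanish, i.e., max(0, V*(s_i,s_j) - V*(s_i,ŝ) - V*(ŝ,s_j)) = 0, max(0, c_prog + V*(s_i,ŝ)) = 0, and max(0, c_nontrivial + V*(ŝ,s_j)) = 0, then (1) V*(s_i,s_j) = V*(s_i,ŝ) + V*(ŝ,s_j), equivalently d(s_i,ŝ) + d(ŝ,s_j) = d(s_i,s_j); (2) d(s_i,ŝ) ≥ c_prog; and (3) d(ŝ,s_j) ≥ c_nontrivial. -/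
/-- Characterization of the global minimum of the regularized
anticipation loss. If all three ReLU loss terms vanish, then the subgoal `shat`
lies exactly on a shortest path (value additivity / distance additivity), is at
distance at least `c_prog` from the start, and at distance at least
`c_nontrivial` from the goal. -/
theorem anticipation_loss_zero_characterization {S : Type*} (d : S → S → ℝ)
    (htri : ∀ x y z, d x z ≤ d x y + d y z)
    (V : S → S → ℝ) (hV : ∀ x y, V x y = -d x y)
    (s_i s_j shat : S) (c_prog c_nontrivial : ℝ)
    (hcp : 0 < c_prog) (hcn : 0 < c_nontrivial)
    (h_detour : max 0 (V s_i s_j - V s_i shat - V shat s_j) = 0)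
    (h_prog : max 0 (c_prog + V s_i shat) = 0)
    (h_nontrivial : max 0 (c_nontrivial + V shat s_j) = 0) :
    (V s_i s_j = V s_i shat + V shat s_j ∧ d s_i shat + d shat s_j = d s_i s_j) ∧
    d s_i shat ≥ c_prog ∧
    d shat s_j ≥ c_nontrivial := by
  have h1 := htri s_i shat s_j
  have hd : V s_i s_j - V s_i shat - V shat s_j ≤ 0 := max_eq_left_iff.mp h_detour
  have hp : c_prog + V s_i shat ≤ 0 := max_eq_left_iff.mp h_prog
  have hn : c_nontrivial + V shat s_j ≤ 0 := max_eq_left_iff.mp h_nontrivial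
  rw [hV, hV, hV] at hd
  rw [hV] at hp
  rw [hV] at hn
  refine ⟨⟨?_, ?_⟩, ?_, ?_⟩ <;> (try simp only [hV]) <;> linarith
end

section
/- Let S be a type, d : S → S → ℝ a function satisfying the triangle inequality, V*(x,y) = -d(x,y), and Vω : S → S → ℝ a function with |Vω(x,y) - V*(x,y)| ≤ ε_V for all x, y, where ε_V ≥ 0. Fix states s, g, ŝ and suppose the anticipation loss bound max(0, Vω(s,g) - Vω(s,ŝ) - Vω(ŝ,g)) ≤ ε_ψ holds for some ε_ψ ≥ 0. Then the true detour cost is bounded: d(s,ŝ) + d(ŝ,g) - d(s,g) ≤ 3ε_V + ε_ψ. -/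
/-- Bounded Detour of Anticipated Subgoals (Lemma 4).
If `Vω` approximates `V* = -d` uniformly within `ε_V` and the anticipation loss
of the subgoal `shat` is at most `ε_ψ`, then the true detour cost is at most
`3ε_V + ε_ψ`. -/
theorem bounded_detour {S : Type*} (d : S → S → ℝ)
    (htri : ∀ x y z, d x z ≤ d x y + d y z)
    (Vstar Vω : S → S → ℝ) (hVstar : ∀ x y, Vstar x y = -d x y)
    (εV εψ : ℝ) (hεV : 0 ≤ εV) (hεψ : 0 ≤ εψ)
    (happrox : ∀ x y, |Vω x y - Vstar x y| ≤ εV)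
    (s g shat : S)
    (hloss : max 0 (Vω s g - Vω s shat - Vω shat g) ≤ εψ) :
    d s shat + d shat g - d s g ≤ 3 * εV + εψ := by
  have h1 := abs_le.mp (happrox s g)
  have h2 := abs_le.mp (happrox s shat)
  have h3 := abs_le.mp (happrox shat g)
  have hl : Vω s g - Vω s shat - Vω shat g ≤ εψ :=
    le_trans (le_max_right _ _) hloss
  rw [hVstar] at h1 h2 h3
  linarith [h1.1, h1.2, h2.1, h2.2, h3.1, h3.2]
end

section
/- Let S be a type, d : S → S → ℝ a function satisfying d(x,x) = 0 and the triangle inequality, and Vω : S → S → ℝ with |Vω(x,y) + d(x,y)| ≤ ε_V for all x, y, where ε_V ≥ 0. Let g ∈ S, let s_0, s_1, ..., s_M be states with s_M = g, and suppose for each k ≤ M-1: (i) the anticipation loss bound max(0, Vω(s_k,g) - Vω(s_k,s_{k+1}) - Vω(s_{k+1},g)) ≤ ε_ψ holds, and (ii) the cost C_k ∈ ℝ incurred traveling from s_k to s_{k+1} satisfies C_k ≤ d(s_k,s_{k+1}) + ε_π, for constants ε_ψ, ε_π ≥ 0. Then the total cost satisfies Σ_{k=0}^{M-1} C_k ≤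 d(s_0, g) + M·(ε_π + 3ε_V + ε_ψ). -/
/-- Bounded Sub-optimality of RLA (Theorem 2).
With `Vω` uniformly `ε_V`-close to `-d`, anticipation loss at most `ε_ψ` at
every high-level step, and per-segment cost at most the shortest-path distance
plus `ε_π`, the total cost is at most `d(s_0,g) + M·(ε_π + 3ε_V + ε_ψ)`. -/
theorem bounded_suboptimality_RLA {S : Type*} (d : S → S → ℝ)
    (hd0 : ∀ x, d x x = 0)
    (htri : ∀ x y z, d x z ≤ d x y + d y z)
    (Vω : S → S → ℝ) (εV : ℝ) (hεV : 0 ≤ εV)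
    (happrox : ∀ x y, |Vω x y + d x y| ≤ εV)
    (M : ℕ) (s : ℕ → S) (g : S) (hend : s M = g)
    (C : ℕ → ℝ) (εψ επ : ℝ) (hεψ : 0 ≤ εψ) (hεπ : 0 ≤ επ)
    (hloss : ∀ k, k ≤ M - 1 → k < M →
      max 0 (Vω (s k) g - Vω (s k) (s (k + 1)) - Vω (s (k + 1)) g) ≤ εψ)
    (hcost : ∀ k, k ≤ M - 1 → k < M → C k ≤ d (s k) (s (k + 1)) + επ) :
    ∑ k ∈ Finset.range M, C k ≤ d (s 0) g + M * (επ + 3 * εV + εψ) := by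
  have key : ∀ k < M, C k ≤ (d (s k) g - d (s (k+1)) g) + (επ + 3 * εV + εψ) := by
    intro k hk
    have hk' : k ≤ M - 1 := Nat.le_sub_one_of_lt hk
    have h1 := hloss k hk' hk
    have h2 := hcost k hk' hk
    have hl : Vω (s k) g - Vω (s k) (s (k + 1)) - Vω (s (k + 1)) g ≤ εψ :=
      le_trans (le_max_right _ _) h1
    have a1 := abs_le.mp (happrox (s k) (s (k+1)))
    have a2 := abs_le.mp (happrox (s k) g)
    have a3 := abs_le.mp (happrox (s (k+1)) g)
    have : d (s k) (s (k+1)) ≤ d (s k) g - d (s (k+1)) g + 3 * εV + εψ := by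
      nlinarith [a1.1, a1.2, a2.1, a2.2, a3.1, a3.2]
    linarith
  have hsum : ∑ k ∈ Finset.range M, C k ≤
      ∑ k ∈ Finset.range M, ((d (s k) g - d (s (k+1)) g) + (επ + 3 * εV + εψ)) :=
    Finset.sum_le_sum fun k hk => key k (Finset.mem_range.mp hk)
  rw [Finset.sum_add_distrib, Finset.sum_range_sub' (fun k => d (s k) g),
    Finset.sum_const, nsmul_eq_mul, Finset.card_range] at hsum
  rw [hend, hd0] at hsum
  linarith
end
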